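/- (Growth estimate for the Yosida approximation) Let p ∈ (1,∞) with conjugate exponent p'. There exists a constant C > 0 depending only on p with the following property: for every real normed space V, every convex function φ : V → [0,∞] with φ(0) < ∞, every λ > 0, and all u, u_λ ∈ V, ξ ∈ V* such that ξ is a subgradient of w ↦ ‖w‖_V^p/p at (u_λ − u)/λ and −ξ is a subgradient of φ at u_λ, one has ‖(u − u_λ)/λ‖_V^p ≤ (2/λ)φ(0) + C‖u‖_V^p/λ^p; consequently also ‖ξ‖_{V*}^{p'} ≤ (2/λ)φ(0) + C‖u‖_V^p/λ^p. -/

import Mathlib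

open ENNReal

/-- `ξ` is a subgradient of the real-valued convex function `g` at `u`. -/
def HasSubgradientAt {V : Type*} [NormedAddCommGroup V] [NormedSpace ℝ V]
    (g : V → ℝ) (ξ : V →L[ℝ] ℝ) (u : V) : Prop :=
  ∀ v : V, g u + ξ (v - u) ≤ g v

/-- `ξ` is a subgradient of the `[0,∞]`-valued convex function `φ` at `u`. -/
def ESubgradientAt {V : Type*} [NormedAddCommGroup V] [NormedSpace ℝ V]
    (φ : V → ℝ≥0∞) (u : V) (ξ : V →L[ℝ] ℝ) : Prop :=
  φ u ≠ ⊤ ∧ ∀ v : V, φ v ≠ ⊤ → (φ u).toReal + ξ (v - u) ≤ (φ v).toReal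

/-- Tangent line inequality for `x ↦ x ^ p`, `p > 1`: the convex function lies above its
tangent at `b`, evaluated at `a`. -/
private lemma tangent_rpow {p : ℝ} (hp : 1 < p) {a b : ℝ} (ha : 0 ≤ a) (hb : 0 ≤ b) :
    b ^ p - a ^ p ≤ p * b ^ (p - 1) * (b - a) := by
  rcases eq_or_lt_of_le hb with hb0 | hb0
  · rw [← hb0, Real.zero_rpow (by positivity : p ≠ 0),
      Real.zero_rpow (by intro h; nlinarith : p - 1 ≠ 0)]
    have : 0 ≤ a ^ p := Real.rpow_nonneg ha p
    nlinarith
  · have hs : (-1 : ℝ) ≤ a / b - 1 := by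
      have : 0 ≤ a / b := div_nonneg ha hb0.le
      linarith
    have key := one_add_mul_self_le_rpow_one_add hs hp.le
    rw [show (1 : ℝ) + (a / b - 1) = a / b by ring] at key
    have hdiv : (a / b) ^ p = a ^ p / b ^ p := Real.div_rpow ha hb0.le p
    have hbp : (0 : ℝ) < b ^ p := Real.rpow_pos_of_pos hb0 p
    have hb1 : b ^ (p - 1) = b ^ p / b := by
      rw [Real.rpow_sub hb0, Real.rpow_one]
    rw [hdiv] at key
    rw [hb1]
    have key2 : b ^ p * (1 + p * (a / b - 1)) ≤ a ^ p := by
      calc b ^ p * (1 + p * (a / b - 1)) ≤ b ^ p * (a ^ p / b ^ p) :=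
            mul_le_mul_of_nonneg_left key hbp.le
        _ = a ^ p := by field_simp
    have hrw : b ^ p * (1 + p * (a / b - 1)) = b ^ p - p * (b ^ p / b) * (b - a) := by
      field_simp
      ring
    rw [hrw] at key2
    linarith

set_option maxHeartbeats 2000000 in
/-- **Growth estimate for the Yosida approximation.** -/
theorem yosida_growth_estimate.{v}
    (p : ℝ) (hp : 1 < p) :
    ∃ C : ℝ, 0 < C ∧
      ∀ (V : Type v) (_ : NormedAddCommGroup V) (_ : NormedSpace ℝ V)
        (φ : V → ℝ≥0∞), (∀ u v : V, ∀ a b : ℝ, 0 ≤ a → 0 ≤ b → a + b = 1 →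
            φ (a • u + b • v) ≤ ENNReal.ofReal a * φ u + ENNReal.ofReal b * φ v) →
        φ 0 ≠ ⊤ →
        ∀ (lam : ℝ), 0 < lam →
        ∀ (u ulam : V) (ξ : V →L[ℝ] ℝ),
          HasSubgradientAt (fun w : V => ‖w‖ ^ p / p) ξ (lam⁻¹ • (ulam - u)) →
          ESubgradientAt φ ulam (-ξ) →
          ‖lam⁻¹ • (u - ulam)‖ ^ p ≤ 2 / lam * (φ 0).toReal + C * ‖u‖ ^ p / lam ^ p ∧
          ‖ξ‖ ^ (p / (p - 1)) ≤ 2 / lam * (φ 0).toReal + C * ‖u‖ ^ p / lam ^ p := by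
  have hp0 : (0 : ℝ) < p := by linarith
  have hp1 : (0 : ℝ) < p - 1 := by linarith
  -- conjugate exponent
  set q : ℝ := p / (p - 1) with hq_def
  have hq1 : 1 < q := by
    rw [hq_def, lt_div_iff₀ hp1]; linarith
  have hq0 : (0 : ℝ) < q := by linarith
  have hpq : (p - 1) * q = p := by
    rw [hq_def]; field_simp
  have hconj : q.HolderConjugate p := by
    exact ((Real.holderConjugate_iff_eq_conjExponent hp).mpr rfl).symm
  -- the Young constant
  set e : ℝ := (q / 8) ^ q⁻¹ with he_def
  have he0 : (0 : ℝ) < e := Real.rpow_pos_of_pos (by positivity) _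
  have heq : e ^ q = q / 8 := Real.rpow_inv_rpow (by positivity) (ne_of_gt hq0)
  have hep : (0 : ℝ) < e ^ p := Real.rpow_pos_of_pos he0 p
  set Cp : ℝ := (e ^ p * p)⁻¹ with hCp_def
  have hCp0 : 0 < Cp := by positivity
  -- Young's inequality with small parameter
  have young : ∀ X B : ℝ, 0 ≤ X → 0 ≤ B →
      X ^ (p - 1) * B ≤ 1 / 8 * X ^ p + Cp * B ^ p := by
    intro X B hX hB
    have hXp : (0 : ℝ) ≤ X ^ (p - 1) := Real.rpow_nonneg hX _
    have hy := Real.young_inequality_of_nonneg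
      (mul_nonneg he0.le hXp) (div_nonneg hB he0.le) hconj
    have h1 : (e * X ^ (p - 1)) ^ q = q / 8 * X ^ p := by
      rw [Real.mul_rpow he0.le hXp, heq, ← Real.rpow_mul hX, hpq]
    have h2 : (B / e) ^ p = B ^ p / e ^ p := Real.div_rpow hB he0.le p
    have hlhs : e * X ^ (p - 1) * (B / e) = X ^ (p - 1) * B := by
      field_simp
    rw [h1, h2, hlhs] at hy
    have hr1 : q / 8 * X ^ p / q = 1 / 8 * X ^ p := by
      field_simp
    have hr2 : B ^ p / e ^ p / p = Cp * B ^ p := by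
      rw [hCp_def]; field_simp
    rw [hr1, hr2] at hy
    exact hy
  -- the point `t` used for the lower bound on `ξ w₀`
  set t : ℝ := (3 / 4 : ℝ) ^ (p - 1)⁻¹ with ht_def
  have ht0 : (0 : ℝ) < t := Real.rpow_pos_of_pos (by norm_num) _
  have ht1 : t < 1 := by
    apply Real.rpow_lt_one (by norm_num) (by norm_num)
    positivity
  have htp : t ^ (p - 1) = 3 / 4 := Real.rpow_inv_rpow (by norm_num) (ne_of_gt hp1)
  -- the constant
  refine ⟨8 / 5 * Cp + 1, by positivity, ?_⟩
  intro V _ _ φ _hconvex hφ0 lam hlam u ulam ξ hξ hφsub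
  set w₀ : V := lam⁻¹ • (ulam - u) with hw₀
  set X : ℝ := ‖w₀‖ with hX_def
  have hX0 : (0 : ℝ) ≤ X := norm_nonneg _
  set F : ℝ := (φ 0).toReal with hF_def
  have hF0 : (0 : ℝ) ≤ F := ENNReal.toReal_nonneg
  set B : ℝ := ‖u‖ / lam with hB_def
  have hB0 : (0 : ℝ) ≤ B := div_nonneg (norm_nonneg _) hlam.le
  have hXp0 : (0 : ℝ) ≤ X ^ p := Real.rpow_nonneg hX0 p
  -- Step 1: lower bound `(3/4) * X^p ≤ ξ w₀`
  have step1 : 3 / 4 * X ^ p ≤ ξ w₀ := by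
    have hsg := hξ (t • w₀)
    simp only at hsg
    have hval : ξ (t • w₀ - w₀) = (t - 1) * ξ w₀ := by
      rw [show t • w₀ - w₀ = (t - 1) • w₀ by rw [sub_smul, one_smul], ξ.map_smul,
        smul_eq_mul]
    have hnorm : ‖t • w₀‖ ^ p = t ^ p * X ^ p := by
      rw [norm_smul, Real.norm_eq_abs, abs_of_pos ht0, ← hX_def,
        Real.mul_rpow ht0.le hX0]
    rw [hval, hnorm, ← hX_def] at hsg
    rw [div_add' _ _ _ hp0.ne', div_le_div_iff_of_pos_right hp0] at hsg
    -- hsg : X ^ p + (t - 1) * ξ w₀ * p ≤ t ^ p * X ^ p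
    have htan := tangent_rpow hp zero_le_one ht0.le
    rw [Real.one_rpow, htp] at htan
    -- htan : t ^ p - 1 ≤ p * (3 / 4) * (t - 1)
    have htan' : (t ^ p - 1) * X ^ p ≤ p * (3 / 4) * (t - 1) * X ^ p :=
      mul_le_mul_of_nonneg_right htan hXp0
    have hfac : (0 : ℝ) < (1 - t) * p := by
      have : 0 < 1 - t := by linarith
      positivity
    have hmain : (1 - t) * p * (3 / 4 * X ^ p) ≤ (1 - t) * p * ξ w₀ := by
      nlinarith [hsg, htan']
    exact le_of_mul_le_mul_left hmain hfac
  -- Step 2: `ξ ulam ≤ F`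
  obtain ⟨hfin, hineq⟩ := hφsub
  have hξu : ξ ulam ≤ F := by
    have h0 := hineq 0 hφ0
    have hrw : ((-ξ) (0 - ulam)) = ξ ulam := by simp
    rw [hrw, ← hF_def] at h0
    have := ENNReal.toReal_nonneg (a := φ ulam)
    linarith
  -- Step 3: pointwise bound on `ξ`
  have hpt : ∀ v : V, ξ v ≤ (X + ‖v‖) ^ (p - 1) * ‖v‖ := by
    intro v
    have hs := hξ (w₀ + v)
    simp only [add_sub_cancel_left] at hs
    rw [div_add' _ _ _ hp0.ne', div_le_div_iff_of_pos_right hp0, ← hX_def] at hs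
    -- hs : X ^ p + ξ v * p ≤ ‖w₀ + v‖ ^ p
    set b : ℝ := ‖w₀ + v‖ with hb_def
    have hb0 : (0 : ℝ) ≤ b := norm_nonneg _
    have hble : b ≤ X + ‖v‖ := norm_add_le w₀ v
    have htan := tangent_rpow hp hX0 hb0
    -- htan : b ^ p - X ^ p ≤ p * b ^ (p - 1) * (b - X)
    have hbp1 : (0 : ℝ) ≤ b ^ (p - 1) := Real.rpow_nonneg hb0 _
    have hb' : b ^ (p - 1) ≤ (X + ‖v‖) ^ (p - 1) :=
      Real.rpow_le_rpow hb0 hble hp1.le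
    have c1 : p * b ^ (p - 1) * (b - X) ≤ p * b ^ (p - 1) * ‖v‖ :=
      mul_le_mul_of_nonneg_left (by linarith) (by positivity)
    have c2 : p * b ^ (p - 1) * ‖v‖ ≤ p * ((X + ‖v‖) ^ (p - 1)) * ‖v‖ := by
      have h := mul_le_mul_of_nonneg_right hb' (norm_nonneg v)
      nlinarith [h, hp0.le]
    have final : ξ v * p ≤ (X + ‖v‖) ^ (p - 1) * ‖v‖ * p := by linarith
    exact le_of_mul_le_mul_right final hp0
  -- Step 4: operator norm bound for every radius `r`
  have hbound : ∀ r : ℝ, 0 < r → ‖ξ‖ ≤ (X + r) ^ (p - 1) := by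
    intro r hr
    refine ContinuousLinearMap.opNorm_le_bound ξ (by positivity) fun v => ?_
    rcases eq_or_ne v 0 with rfl | hv
    · simp
    · have hv0 : (0 : ℝ) < ‖v‖ := norm_pos_iff.mpr hv
      set c : ℝ := r / ‖v‖ with hc_def
      have hc : 0 < c := by positivity
      have hcv : ‖c • v‖ = r := by
        rw [norm_smul, Real.norm_eq_abs, abs_of_pos hc, hc_def,
          div_mul_cancel₀ _ hv0.ne']
      have h1 := hpt (c • v)
      have h2 := hpt ((-c) • v)
      have hcv' : ‖(-c) • v‖ = r := by
        rw [norm_smul, Real.norm_eq_abs, abs_neg, abs_of_pos hc, hc_def,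
          div_mul_cancel₀ _ hv0.ne']
      rw [hcv, ξ.map_smul, smul_eq_mul] at h1
      rw [hcv', ξ.map_smul, smul_eq_mul] at h2
      have hre : (X + r) ^ (p - 1) * r = c * ((X + r) ^ (p - 1) * ‖v‖) := by
        rw [hc_def]; field_simp
      rw [hre] at h1 h2
      have e1 : ξ v ≤ (X + r) ^ (p - 1) * ‖v‖ := le_of_mul_le_mul_left h1 hc
      have e2 : -(ξ v) ≤ (X + r) ^ (p - 1) * ‖v‖ := by
        have h3 : c * -(ξ v) ≤ c * ((X + r) ^ (p - 1) * ‖v‖) := by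
          nlinarith [h2]
        exact le_of_mul_le_mul_left h3 hc
      rw [Real.norm_eq_abs]
      exact abs_le.mpr ⟨by linarith, e1⟩
  -- take the limit `r → 0⁺`
  have hξnorm : ‖ξ‖ ≤ X ^ (p - 1) := by
    have hcont : ContinuousAt (fun y : ℝ => y ^ (p - 1)) (X + 0) :=
      Real.continuousAt_rpow_const _ _ (Or.inr hp1.le)
    have hcont2 : ContinuousAt (fun r : ℝ => (X + r) ^ (p - 1)) 0 :=
      hcont.comp ((continuous_add_left X).continuousAt)
    have hlim : Filter.Tendsto (fun r : ℝ => (X + r) ^ (p - 1))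
        (nhdsWithin 0 (Set.Ioi 0)) (nhds (X ^ (p - 1))) := by
      have h := hcont2.tendsto
      rw [add_zero] at h
      exact h.mono_left nhdsWithin_le_nhds
    refine ge_of_tendsto hlim ?_
    filter_upwards [self_mem_nhdsWithin] with r hr
    exact hbound r hr
  -- assemble
  have hξw : ξ w₀ = lam⁻¹ * (ξ ulam - ξ u) := by
    rw [hw₀, ξ.map_smul, ξ.map_sub, smul_eq_mul]
  have hxu : -(ξ u) ≤ X ^ (p - 1) * ‖u‖ := by
    have h1 := ξ.le_opNorm u
    rw [Real.norm_eq_abs] at h1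
    have h2 : ‖ξ‖ * ‖u‖ ≤ X ^ (p - 1) * ‖u‖ :=
      mul_le_mul_of_nonneg_right hξnorm (norm_nonneg u)
    linarith [neg_abs_le (ξ u)]
  have hup : ξ w₀ ≤ F / lam + X ^ (p - 1) * B := by
    rw [hξw]
    have h1 : ξ ulam - ξ u ≤ F + X ^ (p - 1) * ‖u‖ := by linarith
    calc lam⁻¹ * (ξ ulam - ξ u) ≤ lam⁻¹ * (F + X ^ (p - 1) * ‖u‖) :=
          mul_le_mul_of_nonneg_left h1 (inv_nonneg.mpr hlam.le)
      _ = F / lam + X ^ (p - 1) * B := by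
          rw [hB_def]; field_simp
  have hyoung := young X B hX0 hB0
  have hBp : B ^ p = ‖u‖ ^ p / lam ^ p := Real.div_rpow (norm_nonneg u) hlam.le p
  have hBp0 : (0 : ℝ) ≤ B ^ p := Real.rpow_nonneg hB0 p
  have hFl : (0 : ℝ) ≤ F / lam := div_nonneg hF0 hlam.le
  have hkey : X ^ p ≤ 2 / lam * F + (8 / 5 * Cp + 1) * ‖u‖ ^ p / lam ^ p := by
    have h5 : 5 / 8 * X ^ p ≤ F / lam + Cp * B ^ p := by linarith
    have c1 : 2 / lam * F = 2 * (F / lam) := by ring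
    have c2 : (8 / 5 * Cp + 1) * ‖u‖ ^ p / lam ^ p
        = 8 / 5 * (Cp * B ^ p) + B ^ p := by
      rw [hBp]; ring
    rw [c1, c2]
    nlinarith [h5, hFl, hBp0, hCp0]
  constructor
  · have hflip : lam⁻¹ • (u - ulam) = -w₀ := by
      rw [hw₀, ← smul_neg, neg_sub]
    rw [hflip, norm_neg, ← hX_def]
    exact hkey
  · have hmono : ‖ξ‖ ^ q ≤ (X ^ (p - 1)) ^ q :=
      Real.rpow_le_rpow (norm_nonneg _) hξnorm hq0.le
    have hX2 : (X ^ (p - 1)) ^ q = X ^ p := by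
      rw [← Real.rpow_mul hX0, hpq]
    rw [hX2] at hmono
    linarith
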